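/- Under the stated assumptions, the relaxation step preserves the box of admissible densities: for every ρ = (ρ_1,…,ρ_M) with ρ_j ∈ [0,R_j] for all j, one has T_j(ρ) ∈ [0,R_j] for every j = 1,…,M. (Discrete core of Lemma 2.3: the domain ∏_{j=1}^M [0,R_j] is invariant for the lane-exchange relaxation step of the multi-lane model.) -/

import Mathlib

open Set

lemma mvt_bounds (f : ℝ → ℝ) (hf : Differentiable ℝ f) (p q a b : ℝ) (hpq : p ≤ q)
    (hd : ∀ x ∈ Icc p q, deriv f x ∈ Icc a b) :
    a * (q - p) ≤ f q - f p ∧ f q - f p ≤ b * (q - p) := by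
  constructor
  · exact (convex_Icc p q).mul_sub_le_image_sub_of_le_deriv
      hf.continuous.continuousOn hf.differentiableOn
      (fun x hx => (hd x (interior_subset hx)).1)
      p (left_mem_Icc.2 hpq) q (right_mem_Icc.2 hpq) hpq
  · exact (convex_Icc p q).image_sub_le_mul_sub_of_deriv_le
      hf.continuous.continuousOn hf.differentiableOn
      (fun x hx => (hd x (interior_subset hx)).2)
      p (left_mem_Icc.2 hpq) q (right_mem_Icc.2 hpq) hpq

lemma Sbound (S : ℝ → ℝ → ℝ) (𝒮 R R' : ℝ)
    (hC : ContDiff ℝ 1 (Function.uncurry S))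
    (h1 : ∀ u ∈ Icc (0:ℝ) R, ∀ w ∈ Icc (0:ℝ) R', deriv (fun u' => S u' w) u ∈ Icc (0:ℝ) 𝒮)
    (h2 : ∀ u ∈ Icc (0:ℝ) R, ∀ w ∈ Icc (0:ℝ) R', deriv (fun w' => S u w') w ∈ Icc (-𝒮) (0:ℝ))
    (h00 : S 0 0 = 0) (hRR : S R R' = 0)
    (u w : ℝ) (hu : u ∈ Icc (0:ℝ) R) (hw : w ∈ Icc (0:ℝ) R') :
    (-(𝒮 * w) ≤ S u w ∧ S u w ≤ 𝒮 * u) ∧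
      (-(𝒮 * (R - u)) ≤ S u w ∧ S u w ≤ 𝒮 * (R' - w)) := by
  have hdiff : Differentiable ℝ (Function.uncurry S) := hC.differentiable one_ne_zero
  have hd1 : ∀ w0, Differentiable ℝ (fun u' => S u' w0) := by
    intro w0
    have : (fun u' => S u' w0) = Function.uncurry S ∘ (fun u' => (u', w0)) := rfl
    rw [this]
    exact hdiff.comp (differentiable_id.prodMk (differentiable_const _))
  have hd2 : ∀ u0, Differentiable ℝ (fun w' => S u0 w') := by
    intro u0
    have : (fun w' => S u0 w') = Function.uncurry S ∘ (fun w' => (u0, w')) := rfl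
    rw [this]
    exact hdiff.comp ((differentiable_const _).prodMk differentiable_id)
  obtain ⟨hu0, huR⟩ := hu
  obtain ⟨hw0, hwR⟩ := hw
  have hR0 : (0:ℝ) ≤ R := le_trans hu0 huR
  have hR'0 : (0:ℝ) ≤ R' := le_trans hw0 hwR
  -- bounds via (0,0)
  have B1 := mvt_bounds (fun u' => S u' w) (hd1 w) 0 u 0 𝒮 hu0
    (fun x hx => h1 x ⟨hx.1, le_trans hx.2 huR⟩ w ⟨hw0, hwR⟩)
  have B2 := mvt_bounds (fun w' => S 0 w') (hd2 0) 0 w (-𝒮) 0 hw0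
    (fun x hx => h2 0 ⟨le_rfl, hR0⟩ x ⟨hx.1, le_trans hx.2 hwR⟩)
  -- bounds via (R,R')
  have B3 := mvt_bounds (fun u' => S u' w) (hd1 w) u R 0 𝒮 huR
    (fun x hx => h1 x ⟨le_trans hu0 hx.1, hx.2⟩ w ⟨hw0, hwR⟩)
  have B4 := mvt_bounds (fun w' => S R w') (hd2 R) w R' (-𝒮) 0 hwR
    (fun x hx => h2 R ⟨hR0, le_rfl⟩ x ⟨le_trans hw0 hx.1, hx.2⟩)
  simp only [h00, hRR] at B1 B2 B3 B4
  constructor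
  · constructor <;> nlinarith [B1.1, B1.2, B2.1, B2.2]
  · constructor <;> nlinarith [B3.1, B3.2, B4.1, B4.2]


/-- Discrete core of Lemma 2.3: the relaxation step preserves the box
∏_{j=1}^M [0, R_j] of admissible densities. -/
theorem relaxation_step_invariant_box
(M : ℕ) (hM : 1 ≤ M)
    (R : ℕ → ℝ) (hR : ∀ j, 1 ≤ j → j ≤ M → 0 < R j)
    (𝒮 τ Δt : ℝ) (h𝒮 : 0 < 𝒮) (hτ : 0 < τ) (hΔt : 0 < Δt)
    (hΔtτ : Δt ≤ τ / (2 * 𝒮))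
    (S : ℕ → ℝ → ℝ → ℝ)
    (hS0 : ∀ u w, S 0 u w = 0)
    (hSM : ∀ u w, S M u w = 0)
    (hSC1 : ∀ j, 1 ≤ j → j ≤ M - 1 → ContDiff ℝ 1 (Function.uncurry (S j)))
    (hS1 : ∀ j, 1 ≤ j → j ≤ M - 1 → ∀ u ∈ Icc (0:ℝ) (R j), ∀ w ∈ Icc (0:ℝ) (R (j+1)),
      deriv (fun u' => S j u' w) u ∈ Icc (0:ℝ) 𝒮)
    (hS2 : ∀ j, 1 ≤ j → j ≤ M - 1 → ∀ u ∈ Icc (0:ℝ) (R j), ∀ w ∈ Icc (0:ℝ) (R (j+1)),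
      deriv (fun w' => S j u w') w ∈ Icc (-𝒮) (0:ℝ))
    (hS00 : ∀ j, 1 ≤ j → j ≤ M - 1 → S j 0 0 = 0)
    (hSRR : ∀ j, 1 ≤ j → j ≤ M - 1 → S j (R j) (R (j+1)) = 0)
    (g : (ℕ → ℝ) → ℕ → ℝ)
    (hg : ∀ ρ j, g ρ j = S (j-1) (ρ (j-1)) (ρ j) - S j (ρ j) (ρ (j+1)))
    (T : (ℕ → ℝ) → ℕ → ℝ)
    (hT : ∀ ρ j, T ρ j = ρ j + (Δt / τ) * g ρ j)
    (ρ : ℕ → ℝ) (hρ : ∀ j, 1 ≤ j → j ≤ M → ρ j ∈ Icc (0:ℝ) (R j)) :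
    ∀ j, 1 ≤ j → j ≤ M → T ρ j ∈ Icc (0:ℝ) (R j) := by
  intro j hj1 hjM
  obtain ⟨hρ0, hρR⟩ := hρ j hj1 hjM
  set A := S (j-1) (ρ (j-1)) (ρ j) with hA_def
  set B := S j (ρ j) (ρ (j+1)) with hB_def
  have h𝒮' : (0:ℝ) < 2 * 𝒮 := by linarith
  have hA : -(𝒮 * ρ j) ≤ A ∧ A ≤ 𝒮 * (R j - ρ j) := by
    rcases eq_or_lt_of_le hj1 with h | h
    · have : A = 0 := by rw [hA_def, ← h]; exact hS0 _ _
      rw [this]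
      constructor <;> nlinarith
    · have hk1 : 1 ≤ j - 1 := by omega
      have hkM : j - 1 ≤ M - 1 := by omega
      have hkk : j - 1 + 1 = j := by omega
      have hρk := hρ (j-1) hk1 (by omega)
      have H1 := hS1 (j-1) hk1 hkM
      have H2 := hS2 (j-1) hk1 hkM
      have HRR := hSRR (j-1) hk1 hkM
      rw [hkk] at H1 H2 HRR
      have Hb := Sbound (S (j-1)) 𝒮 (R (j-1)) (R j) (hSC1 (j-1) hk1 hkM)
        H1 H2 (hS00 (j-1) hk1 hkM) HRR (ρ (j-1)) (ρ j) hρk ⟨hρ0, hρR⟩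
      exact ⟨Hb.1.1, Hb.2.2⟩
  have hB : -(𝒮 * (R j - ρ j)) ≤ B ∧ B ≤ 𝒮 * ρ j := by
    rcases eq_or_lt_of_le hjM with h | h
    · have : B = 0 := by rw [hB_def, h]; exact hSM _ _
      rw [this]
      constructor <;> nlinarith
    · have hjM' : j ≤ M - 1 := by omega
      have hρk := hρ (j+1) (by omega) (by omega)
      have Hb := Sbound (S j) 𝒮 (R j) (R (j+1)) (hSC1 j hj1 hjM')
        (hS1 j hj1 hjM') (hS2 j hj1 hjM') (hS00 j hj1 hjM') (hSRR j hj1 hjM')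
        (ρ j) (ρ (j+1)) ⟨hρ0, hρR⟩ hρk
      exact ⟨Hb.2.1, Hb.1.2⟩
  have h2S : 2 * 𝒮 * Δt ≤ τ := by
    rw [le_div_iff₀ h𝒮'] at hΔtτ; linarith
  have hr0 : 0 < Δt / τ := div_pos hΔt hτ
  have hr1 : 2 * 𝒮 * (Δt / τ) ≤ 1 := by
    rw [← mul_div_assoc, div_le_one hτ]; exact h2S
  rw [hT, hg, ← hA_def, ← hB_def]
  constructor
  · nlinarith [mul_le_mul_of_nonneg_left (show -(2 * 𝒮 * ρ j) ≤ A - B by linarith [hA.1, hB.2]) hr0.le,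
      mul_nonneg (show (0:ℝ) ≤ 1 - 2 * 𝒮 * (Δt / τ) by linarith) hρ0]
  · nlinarith [mul_le_mul_of_nonneg_left (show A - B ≤ 2 * 𝒮 * (R j - ρ j) by linarith [hA.2, hB.1]) hr0.le,
      mul_nonneg (show (0:ℝ) ≤ 1 - 2 * 𝒮 * (Δt / τ) by linarith) (show (0:ℝ) ≤ R j - ρ j by linarith)]
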